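/- Let p_1, ..., p_r be distinct primes and K = Q(√p_1, ..., √p_r). If L is a subfield of K with [L : Q] = 2, then L = Q(√(∏_{i∈I} p_i)) for some nonempty subset I ⊆ {1, ..., r}. -/

import Mathlib

open IntermediateField

lemma repr_lemma (F : IntermediateField ℚ ℝ) (s m : ℝ) (hm : s ^ 2 = m) (hmF : m ∈ F) :
    ∀ y ∈ IntermediateField.adjoin F {s}, ∃ a b : ℝ, a ∈ F ∧ b ∈ F ∧ y = a + b * s := by
  have hint : IsIntegral F s := by
    refine ⟨Polynomial.X ^ 2 - Polynomial.C ⟨m, hmF⟩, Polynomial.monic_X_pow_sub_C _ (by norm_num), ?_⟩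
    simp [Polynomial.eval₂, ← hm]
  intro y hy
  have hy' : y ∈ Algebra.adjoin F {s} := by
    rw [← adjoin_simple_toSubalgebra_of_isAlgebraic hint.isAlgebraic]
    exact hy
  clear hy
  induction hy' using Algebra.adjoin_induction with
  | mem x hx =>
    rw [Set.mem_singleton_iff] at hx
    exact ⟨0, 1, zero_mem F, one_mem F, by rw [hx]; ring⟩
  | algebraMap r => exact ⟨r, 0, r.2, zero_mem F, by simp⟩
  | add x y _ _ hx hy =>
    obtain ⟨a, b, ha, hb, rfl⟩ := hx
    obtain ⟨a', b', ha', hb', rfl⟩ := hy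
    exact ⟨a + a', b + b', add_mem ha ha', add_mem hb hb', by ring⟩
  | mul x y _ _ hx hy =>
    obtain ⟨a, b, ha, hb, rfl⟩ := hx
    obtain ⟨a', b', ha', hb', rfl⟩ := hy
    refine ⟨a * a' + b * b' * m, a * b' + b * a', ?_, ?_, by linear_combination (b * b') * hm⟩
    · exact add_mem (mul_mem ha ha') (mul_mem (mul_mem hb hb') hmF)
    · exact add_mem (mul_mem ha hb') (mul_mem hb ha')

lemma key_lemma (r : ℕ) (p : Fin r → ℕ) (hp : ∀ i, Nat.Prime (p i)) (S : Finset (Fin r)) :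
    ∀ y : ℝ, y ∈ IntermediateField.adjoin ℚ ((fun i => Real.sqrt (p i)) '' ↑S) →
    (∃ q : ℚ, y ^ 2 = (q : ℝ)) →
    ∃ I : Finset (Fin r), I ⊆ S ∧ ∃ c : ℚ, y = (c : ℝ) * Real.sqrt (∏ i ∈ I, (p i : ℝ)) := by
  classical
  induction S using Finset.induction_on with
  | empty =>
    intro y hy _
    simp only [Finset.coe_empty, Set.image_empty, IntermediateField.adjoin_empty] at hy
    rw [IntermediateField.mem_bot] at hy
    obtain ⟨q, rfl⟩ := hy
    exact ⟨∅, Finset.Subset.refl _, q, by simp⟩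
  | @insert j T hj ih =>
    intro y hy hq
    obtain ⟨q, hq⟩ := hq
    set s := Real.sqrt (p j) with hs_def
    set F := IntermediateField.adjoin ℚ ((fun i => Real.sqrt (p i)) '' ↑T) with hF_def
    have hpj_pos : (0:ℝ) < (p j : ℝ) := by exact_mod_cast (hp j).pos
    have hs2 : s ^ 2 = (p j : ℝ) := Real.sq_sqrt hpj_pos.le
    have himg : ((fun i => Real.sqrt (p i)) '' ↑(insert j T) : Set ℝ)
        = ((fun i => Real.sqrt (p i)) '' ↑T) ∪ {s} := by
      rw [Finset.coe_insert, Set.image_insert_eq]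
      rw [Set.insert_eq, Set.union_comm]
    by_cases hsF : s ∈ F
    · -- adjoin collapses
      have : y ∈ F := by
        have hle : IntermediateField.adjoin ℚ ((fun i => Real.sqrt (p i)) '' ↑(insert j T)) ≤ F := by
          rw [himg]
          apply IntermediateField.adjoin_le_iff.mpr
          rintro x (hx | hx)
          · exact IntermediateField.subset_adjoin _ _ hx
          · rw [Set.mem_singleton_iff] at hx; subst hx; exact hsF
        exact hle hy
      obtain ⟨I, hIT, c, hc⟩ := ih y this ⟨q, hq⟩
      exact ⟨I, hIT.trans (Finset.subset_insert _ _), c, hc⟩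
    · -- s not in F: use representation
      have hy' : y ∈ IntermediateField.adjoin F {s} := by
        have := IntermediateField.adjoin_adjoin_left ℚ ((fun i => Real.sqrt (p i)) '' ↑T) {s}
        have hmem : y ∈ (IntermediateField.adjoin F {s}).restrictScalars ℚ := by
          exact (SetLike.ext_iff.mp this y).mpr (by rw [← himg]; exact hy)
        exact hmem
      have hmF : ((p j : ℝ)) ∈ F := by
        have : ((p j : ℚ) : ℝ) ∈ F := SubfieldClass.ratCast_mem F _
        simpa using this
      obtain ⟨a, b, ha, hb, rfl⟩ := repr_lemma F s _ hs2 hmF y hy'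
      -- (a+bs)^2 = a^2 + b^2 pj + 2ab s = q
      have hexp : (2 * (a * b)) * s = (q : ℝ) - a ^ 2 - b ^ 2 * (p j : ℝ) := by
        linear_combination hq - (b^2) * hs2
      have hab : a * b = 0 := by
        by_contra hab
        apply hsF
        have : s = ((q : ℝ) - a ^ 2 - b ^ 2 * (p j : ℝ)) / (2 * (a * b)) := by
          rw [eq_div_iff (mul_ne_zero two_ne_zero hab)]; linear_combination hexp
        rw [this]
        have hqF : ((q : ℝ)) ∈ F := SubfieldClass.ratCast_mem F _
        exact div_mem (sub_mem (sub_mem hqF (pow_mem ha 2)) (mul_mem (pow_mem hb 2) hmF))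
          (mul_mem (by exact_mod_cast IntermediateField.natCast_mem F 2) (mul_mem ha hb))
      rcases mul_eq_zero.mp hab with ha0 | hb0
      · -- a = 0 : y = b * s
        subst ha0
        have hb2 : b ^ 2 = ((q / (p j : ℚ) : ℚ) : ℝ) := by
          push_cast
          rw [eq_div_iff (ne_of_gt hpj_pos)]
          linear_combination hq - (b^2) * hs2
        obtain ⟨I, hIT, c, hc⟩ := ih b hb ⟨_, hb2⟩
        refine ⟨insert j I, Finset.insert_subset_insert _ hIT, c, ?_⟩
        have hjI : j ∉ I := fun h => hj (hIT h)
        rw [Finset.prod_insert hjI]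
        have hprod_nonneg : (0:ℝ) ≤ ∏ i ∈ I, (p i : ℝ) :=
          Finset.prod_nonneg fun i _ => by positivity
        rw [Real.sqrt_mul hpj_pos.le, hc]
        ring
      · -- b = 0 : y = a ∈ F
        subst hb0
        simp only [zero_mul, add_zero]
        obtain ⟨I, hIT, c, hc⟩ := ih a ha ⟨q, by linarith [hq]⟩
        exact ⟨I, hIT.trans (Finset.subset_insert _ _), c, hc⟩

/-- If L is a subfield of ℚ(√p_1, ..., √p_r) with [L:ℚ] = 2, then
L = ℚ(√(∏_{i∈I} p_i)) for some nonempty I ⊆ {1,...,r}. -/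
theorem stmt1 (r : ℕ) (p : Fin r → ℕ) (hp : ∀ i, Nat.Prime (p i))
    (hinj : Function.Injective p)
    (L : IntermediateField ℚ ℝ)
    (hL : L ≤ IntermediateField.adjoin ℚ (Set.range fun i => Real.sqrt (p i)))
    (hdeg : Module.finrank ℚ L = 2) :
    ∃ I : Finset (Fin r), I.Nonempty ∧
      L = IntermediateField.adjoin ℚ {Real.sqrt (∏ i ∈ I, (p i : ℝ))} := by
  classical
  have hfd : FiniteDimensional ℚ L := FiniteDimensional.of_finrank_pos (by omega)
  have hratmem : ∀ (q : ℚ) (F : IntermediateField ℚ ℝ), ((q : ℝ)) ∈ F :=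
    fun q F => SubfieldClass.ratCast_mem F q
  have hbot : ∀ z : ℝ, z ∈ (⊥ : IntermediateField ℚ ℝ) ↔ ∃ q : ℚ, (q : ℝ) = z := by
    intro z
    rw [IntermediateField.mem_bot]
    constructor
    · rintro ⟨q, rfl⟩; exact ⟨q, by norm_num [algebraMap]⟩
    · rintro ⟨q, rfl⟩; exact ⟨q, by norm_num [algebraMap]⟩
  -- find x ∈ L irrational
  have hex : ∃ x : ℝ, x ∈ L ∧ x ∉ (⊥ : IntermediateField ℚ ℝ) := by
    by_contra h
    push_neg at h
    have : L ≤ ⊥ := fun z hz => h z hz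
    have hbe : L = ⊥ := le_antisymm this bot_le
    rw [hbe, IntermediateField.finrank_bot] at hdeg
    omega
  obtain ⟨x, hxL, hxirr⟩ := hex
  -- 1, x, x^2 linearly dependent over ℚ in L
  have hdep : ¬ LinearIndependent ℚ ![(1 : L), ⟨x, hxL⟩, ⟨x^2, pow_mem hxL 2⟩] := by
    intro hli
    have := hli.fintype_card_le_finrank
    simp [hdeg] at this
  rw [Fintype.not_linearIndependent_iff] at hdep
  obtain ⟨g, hgsum, i0, hgi0⟩ := hdep
  have hrel : (g 0 : ℝ) + (g 1 : ℝ) * x + (g 2 : ℝ) * x ^ 2 = 0 := by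
    have := congrArg (Subtype.val) hgsum
    simp [Fin.sum_univ_three, Rat.smul_def] at this
    push_cast at this
    linarith [this]
  have hg2 : g 2 ≠ 0 := by
    intro hg2
    have hg1 : g 1 = 0 := by
      by_contra hg1
      apply hxirr
      rw [hbot]
      refine ⟨-(g 0) / (g 1), ?_⟩
      have hg1' : ((g 1 : ℝ)) ≠ 0 := by exact_mod_cast hg1
      push_cast
      field_simp
      rw [hg2] at hrel
      push_cast at hrel
      linarith [hrel]
    have hg0 : g 0 = 0 := by
      rw [hg2, hg1] at hrel
      push_cast at hrel
      have : (g 0 : ℝ) = 0 := by linarith [hrel]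
      exact_mod_cast this
    fin_cases i0 <;> simp_all
  have hg2' : ((g 2 : ℝ)) ≠ 0 := by exact_mod_cast hg2
  -- y := 2 g2 x + g1
  set y : ℝ := (2 * (g 2) : ℚ) * x + ((g 1 : ℚ) : ℝ) with hy_def
  have hyL : y ∈ L := add_mem (mul_mem (hratmem _ L) hxL) (hratmem _ L)
  have hysq : ∃ q : ℚ, y ^ 2 = (q : ℝ) := by
    refine ⟨g 1 ^ 2 - 4 * g 0 * g 2, ?_⟩
    rw [hy_def]
    push_cast
    linear_combination (4 * (g 2 : ℝ)) * hrel
  have hyirr : y ∉ (⊥ : IntermediateField ℚ ℝ) := by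
    intro hy
    apply hxirr
    rw [hbot] at hy ⊢
    obtain ⟨q, hq⟩ := hy
    refine ⟨(q - g 1) / (2 * g 2), ?_⟩
    push_cast
    rw [hy_def] at hq
    push_cast at hq
    field_simp
    linarith [hq]
  -- L = adjoin ℚ {y}
  have hLy : L = IntermediateField.adjoin ℚ {y} := by
    apply le_antisymm
    · intro z hzL
      have hli : LinearIndependent ℚ ![(1 : L), ⟨y, hyL⟩] := by
        rw [LinearIndependent.pair_iff]
        intro s u hsu
        have hco : (s : ℝ) + (u : ℝ) * y = 0 := by
          have := congrArg (Subtype.val) hsu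
          simp [Rat.smul_def] at this
          linarith [this]
        have hu : u = 0 := by
          by_contra hu
          apply hyirr
          rw [hbot]
          refine ⟨-s / u, ?_⟩
          have hu' : ((u : ℝ)) ≠ 0 := by exact_mod_cast hu
          push_cast
          field_simp
          linarith [hco]
        refine ⟨?_, hu⟩
        rw [hu] at hco
        push_cast at hco
        have : (s : ℝ) = 0 := by linarith [hco]
        exact_mod_cast this
      have hspan : Submodule.span ℚ (Set.range ![(1 : L), ⟨y, hyL⟩]) = ⊤ := by
        apply Submodule.eq_top_of_finrank_eq
        rw [finrank_span_eq_card hli, hdeg]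
        simp
      have hrange : Set.range ![(1 : L), ⟨y, hyL⟩] = {(1 : L), ⟨y, hyL⟩} := by
        simp [Matrix.range_cons, Matrix.range_empty]
        exact Set.pair_comm _ _
      rw [hrange] at hspan
      have : (⟨z, hzL⟩ : L) ∈ Submodule.span ℚ {(1 : L), (⟨y, hyL⟩ : L)} := by
        rw [hspan]; trivial
      rw [Submodule.mem_span_pair] at this
      obtain ⟨m, n, hmn⟩ := this
      have hzval : (m : ℝ) + (n : ℝ) * y = z := by
        have := congrArg (Subtype.val) hmn
        simp [Rat.smul_def] at this
        linarith [this]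
      rw [← hzval]
      exact add_mem (hratmem m _) (mul_mem (hratmem n _)
        (IntermediateField.mem_adjoin_simple_self ℚ y))
    · exact IntermediateField.adjoin_le_iff.mpr (Set.singleton_subset_iff.mpr hyL)
  -- apply key lemma
  have hyK : y ∈ IntermediateField.adjoin ℚ
      ((fun i => Real.sqrt (p i)) '' ↑(Finset.univ : Finset (Fin r))) := by
    have h1 : (Set.range fun i => Real.sqrt (p i))
        = (fun i => Real.sqrt (p i)) '' ↑(Finset.univ : Finset (Fin r)) := by simp
    rw [← h1]
    exact hL hyL
  obtain ⟨I, _, c, hc⟩ := key_lemma r p hp Finset.univ y hyK hysq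
  have hIne : I.Nonempty := by
    rcases Finset.eq_empty_or_nonempty I with hI | hI
    · exfalso
      apply hyirr
      rw [hbot]
      refine ⟨c, ?_⟩
      rw [hc, hI]
      simp
    · exact hI
  have hc0 : c ≠ 0 := by
    intro h
    apply hyirr
    rw [hbot]
    exact ⟨0, by rw [hc, h]; push_cast; ring⟩
  refine ⟨I, hIne, ?_⟩
  rw [hLy]
  set w : ℝ := Real.sqrt (∏ i ∈ I, (p i : ℝ)) with hw
  have hc0' : ((c : ℝ)) ≠ 0 := by exact_mod_cast hc0
  apply le_antisymm
  · apply IntermediateField.adjoin_le_iff.mpr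
    rw [Set.singleton_subset_iff, hc]
    exact mul_mem (hratmem c _) (IntermediateField.mem_adjoin_simple_self ℚ w)
  · apply IntermediateField.adjoin_le_iff.mpr
    rw [Set.singleton_subset_iff]
    have hwy : w = (((c⁻¹ : ℚ)) : ℝ) * y := by
      rw [hc]; push_cast; field_simp
    rw [hwy]
    exact mul_mem (hratmem _ _) (IntermediateField.mem_adjoin_simple_self ℚ y)
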